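/- The number of n-vertex d-hypertrees satisfies |T_{n,d}| >= (n/(d+1))^{C(n-1,d)}, given the shadow bound: for every d-acyclic set X of d-faces, the number of d-faces extending X to a larger d-acyclic set is at least C(n,d+1)·(1 - |X|/C(n-1,d)). -/

import Mathlib

open Matrix

def boundaryMatrix (n d : ℕ) :
    Matrix {s : Finset (Fin n) // s.card = d} {s : Finset (Fin n) // s.card = d + 1} ℚ :=
  fun τ σ =>
    if τ.1 ⊆ σ.1 then
      ∑ v ∈ σ.1 \ τ.1, (-1 : ℚ) ^ ((σ.1.filter (fun w => w < v)).card)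
    else 0


lemma col_relation (n d : ℕ) (ρ : Finset (Fin n)) (hρ : ρ.card = d + 2) :
    ∑ v ∈ ρ.attach, (-1 : ℚ) ^ ((ρ.filter (fun w => w < v.1)).card) •
      (boundaryMatrix n d)ᵀ ⟨ρ.erase v.1, by
        simp [Finset.card_erase_of_mem v.2, hρ]⟩ = 0 := by
  classical
  funext τ
  simp only [Finset.sum_apply, Pi.smul_apply, Pi.zero_apply, Matrix.transpose_apply,
    boundaryMatrix, smul_eq_mul]
  by_cases hτ : τ.1 ⊆ ρ
  · have hcard : (ρ \ τ.1).card = 2 := by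
      rw [Finset.card_sdiff_of_subset hτ, hρ, τ.2]; omega
    obtain ⟨a, b, hab, hs⟩ := Finset.card_eq_two.mp hcard
    have ha : a ∈ ρ ∧ a ∉ τ.1 := by
      have : a ∈ ρ \ τ.1 := by rw [hs]; simp
      exact ⟨(Finset.mem_sdiff.mp this).1, (Finset.mem_sdiff.mp this).2⟩
    have hb : b ∈ ρ ∧ b ∉ τ.1 := by
      have : b ∈ ρ \ τ.1 := by rw [hs]; simp
      exact ⟨(Finset.mem_sdiff.mp this).1, (Finset.mem_sdiff.mp this).2⟩
    have hsub : ({⟨a, ha.1⟩, ⟨b, hb.1⟩} : Finset ρ) ⊆ ρ.attach := fun x _ => Finset.mem_attach _ x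
    rw [← Finset.sum_subset hsub]
    · rw [Finset.sum_pair (by simpa [Subtype.ext_iff] using hab)]
      have key : ∀ x : Fin n, x ∉ τ.1 → (ρ.erase x) \ τ.1 = (ρ \ τ.1).erase x := by
        intro x _
        ext z; simp only [Finset.mem_erase, Finset.mem_sdiff]; tauto
      have hsa : τ.1 ⊆ ρ.erase a := Finset.subset_erase.mpr ⟨hτ, ha.2⟩
      have hsb : τ.1 ⊆ ρ.erase b := Finset.subset_erase.mpr ⟨hτ, hb.2⟩
      rw [if_pos hsa, if_pos hsb]
      have ea : (ρ.erase a) \ τ.1 = {b} := by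
        rw [key a ha.2, hs]
        ext z; simp only [Finset.mem_erase, Finset.mem_insert, Finset.mem_singleton]
        constructor
        · rintro ⟨h1, h2 | h2⟩ <;> tauto
        · rintro rfl; exact ⟨Ne.symm hab, Or.inr rfl⟩
      have eb : (ρ.erase b) \ τ.1 = {a} := by
        rw [key b hb.2, hs]
        ext z; simp only [Finset.mem_erase, Finset.mem_insert, Finset.mem_singleton]
        constructor
        · rintro ⟨h1, h2 | h2⟩ <;> tauto
        · rintro rfl; exact ⟨hab, Or.inl rfl⟩
      rw [ea, eb, Finset.sum_singleton, Finset.sum_singleton]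
      have main : ∀ x y : Fin n, x ∈ ρ → y ∈ ρ → x < y →
          (-1:ℚ) ^ ((ρ.filter (fun w => w < x)).card) *
            (-1) ^ (((ρ.erase x).filter (fun w => w < y)).card) +
          (-1:ℚ) ^ ((ρ.filter (fun w => w < y)).card) *
            (-1) ^ (((ρ.erase y).filter (fun w => w < x)).card) = 0 := by
        intro x y hx hy hxy
        have h1 : (ρ.erase x).filter (fun w => w < y) = (ρ.filter (fun w => w < y)).erase x := by
          rw [Finset.filter_erase]
        have hxmem : x ∈ ρ.filter (fun w => w < y) := Finset.mem_filter.mpr ⟨hx, hxy⟩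
        have h2 : (ρ.erase y).filter (fun w => w < x) = ρ.filter (fun w => w < x) := by
          rw [Finset.filter_erase, Finset.erase_eq_of_notMem]
          simp only [Finset.mem_filter, not_and]
          intro _ hc; exact absurd hc (not_lt.mpr (le_of_lt hxy))
        rw [h1, h2, Finset.card_erase_of_mem hxmem]
        obtain ⟨c, hc⟩ : ∃ c, (ρ.filter (fun w => w < y)).card = c + 1 :=
          ⟨_, (Nat.succ_pred_eq_of_pos (Finset.card_pos.mpr ⟨x, hxmem⟩)).symm⟩
        rw [hc]
        simp only [Nat.add_sub_cancel, pow_succ]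
        ring
      rcases lt_or_gt_of_ne hab with h | h
      · exact main a b ha.1 hb.1 h
      · rw [add_comm]; exact main b a hb.1 ha.1 h
    · intro x _ hx
      have hxτ : x.1 ∈ τ.1 := by
        by_contra hxt
        apply hx
        have : x.1 ∈ ρ \ τ.1 := Finset.mem_sdiff.mpr ⟨x.2, hxt⟩
        rw [hs] at this
        rcases Finset.mem_insert.mp this with h | h
        · exact Finset.mem_insert.mpr (Or.inl (Subtype.ext h))
        · exact Finset.mem_insert.mpr
            (Or.inr (Finset.mem_singleton.mpr (Subtype.ext (Finset.mem_singleton.mp h))))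
      rw [if_neg, mul_zero]
      intro hcon
      exact (Finset.subset_erase.mp hcon).2 hxτ
  · rw [Finset.sum_eq_zero]
    intro x _
    rw [if_neg, mul_zero]
    intro hcon
    exact hτ (hcon.trans (Finset.erase_subset _ _))

set_option maxHeartbeats 1000000 in
lemma boundary_rank_le (n d : ℕ) (hn : d < n) :
    Module.finrank ℚ (Submodule.span ℚ (Set.range (boundaryMatrix n d)ᵀ)) ≤
      (n - 1).choose d := by
  classical
  have hnpos : 0 < n := lt_of_le_of_lt (Nat.zero_le d) hn
  set v₀ : Fin n := ⟨0, hnpos⟩ with hv₀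
  set col := (boundaryMatrix n d)ᵀ with hcol
  set S : Finset {s : Finset (Fin n) // s.card = d + 1} :=
    Finset.univ.filter (fun σ => v₀ ∈ σ.1) with hS
  have hspan : Submodule.span ℚ (Set.range col) ≤ Submodule.span ℚ (col '' ↑S) := by
    rw [Submodule.span_le]
    rintro _ ⟨σ, rfl⟩
    by_cases h0 : v₀ ∈ σ.1
    · exact Submodule.subset_span ⟨σ, by simp [hS, h0], rfl⟩
    · set ρ : Finset (Fin n) := insert v₀ σ.1 with hρ
      have hρcard : ρ.card = d + 2 := by
        rw [hρ, Finset.card_insert_of_notMem h0, σ.2]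
      have hrel := col_relation n d ρ hρcard
      set z₀ : {x // x ∈ ρ} := ⟨v₀, Finset.mem_insert_self _ _⟩ with hz₀
      rw [← Finset.add_sum_erase _ _ (Finset.mem_attach ρ z₀)] at hrel
      have hfz : (ρ.filter (fun w => w < (z₀ : Fin n))).card = 0 := by
        rw [Finset.card_eq_zero]
        apply Finset.filter_false_of_mem
        intro x _
        simp [hz₀, hv₀, Fin.lt_def]
      have herase : ρ.erase (z₀ : Fin n) = σ.1 := Finset.erase_insert h0
      have hze : (⟨ρ.erase (z₀:Fin n), by simp [Finset.card_erase_of_mem z₀.2, hρcard]⟩ :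
          {s : Finset (Fin n) // s.card = d + 1}) = σ := Subtype.ext herase
      rw [hfz, pow_zero, one_smul, hze] at hrel
      have hcs : col σ = - ∑ v ∈ ρ.attach.erase z₀,
          (-1 : ℚ) ^ ((ρ.filter (fun w => w < v.1)).card) •
            col ⟨ρ.erase v.1, by simp [Finset.card_erase_of_mem v.2, hρcard]⟩ :=
        eq_neg_of_add_eq_zero_left hrel
      rw [hcs]
      apply Submodule.neg_mem
      apply Submodule.sum_mem
      intro v hv
      apply Submodule.smul_mem
      apply Submodule.subset_span
      refine ⟨⟨ρ.erase v.1, by simp [Finset.card_erase_of_mem v.2, hρcard]⟩, ?_, rfl⟩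
      have hvne : (v : Fin n) ≠ v₀ := by
        intro hc
        exact (Finset.mem_erase.mp hv).1 (Subtype.ext hc)
      simp only [hS, Finset.coe_filter, Finset.mem_univ, true_and, Set.mem_setOf_eq]
      exact Finset.mem_erase.mpr ⟨Ne.symm hvne, Finset.mem_insert_self _ _⟩
  have hle2 : Submodule.span ℚ (Set.range col) ≤
      Submodule.span ℚ (↑(S.image col) : Set _) := by
    exact le_trans hspan (le_of_eq (congrArg _ Finset.coe_image.symm))
  have h1 : Module.finrank ℚ (Submodule.span ℚ (Set.range col)) ≤
      Module.finrank ℚ (Submodule.span ℚ (↑(S.image col) : Set _)) :=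
    Submodule.finrank_mono hle2
  have h2 := finrank_span_finset_le_card (R := ℚ) (S.image col)
  have h3 : (S.image col).card ≤ S.card := Finset.card_image_le
  have h4 : S.card ≤ (n - 1).choose d := by
    have hc : S.card ≤ (Finset.powersetCard d ((Finset.univ : Finset (Fin n)).erase v₀)).card := by
      apply Finset.card_le_card_of_injOn (fun σ => σ.1.erase v₀)
      · intro σ hσ
        have hv : v₀ ∈ σ.1 := (Finset.mem_filter.mp hσ).2
        rw [Finset.mem_coe, Finset.mem_powersetCard]
        constructor
        · intro x hx
          exact Finset.mem_erase.mpr ⟨(Finset.mem_erase.mp hx).1, Finset.mem_univ x⟩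
        · rw [Finset.card_erase_of_mem hv, σ.2]; omega
      · intro σ hσ τ hτ heq0
        have heq : σ.1.erase v₀ = τ.1.erase v₀ := heq0
        have hvσ : v₀ ∈ σ.1 := (Finset.mem_filter.mp (Finset.mem_coe.mp hσ)).2
        have hvτ : v₀ ∈ τ.1 := (Finset.mem_filter.mp (Finset.mem_coe.mp hτ)).2
        apply Subtype.ext
        ext x
        by_cases hx : x = v₀
        · subst hx; simp [hvσ, hvτ]
        · constructor
          · intro h
            have : x ∈ σ.1.erase v₀ := Finset.mem_erase.mpr ⟨hx, h⟩
            rw [heq] at this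
            exact (Finset.mem_erase.mp this).2
          · intro h
            have : x ∈ τ.1.erase v₀ := Finset.mem_erase.mpr ⟨hx, h⟩
            rw [← heq] at this
            exact (Finset.mem_erase.mp this).2
    rwa [Finset.card_powersetCard, Finset.card_erase_of_mem (Finset.mem_univ v₀),
      Finset.card_univ, Fintype.card_fin] at hc
  exact h1.trans (le_trans h2 (h3.trans h4))

def IndSet (n d : ℕ) (X : Finset {s : Finset (Fin n) // s.card = d + 1}) : Prop :=
  LinearIndependent ℚ (fun σ : ↥X => (boundaryMatrix n d)ᵀ σ.1)

lemma indSet_empty (n d : ℕ) : IndSet n d ∅ := by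
  have : IsEmpty (↥(∅ : Finset {s : Finset (Fin n) // s.card = d + 1})) :=
    ⟨fun x => absurd x.2 (Finset.notMem_empty x.1)⟩
  exact linearIndependent_empty_type

set_option maxHeartbeats 1000000 in
lemma count_step (n d : ℕ)
    (hshadow : ∀ X : Finset {s : Finset (Fin n) // s.card = d + 1},
      IndSet n d X →
      (n.choose (d + 1) : ℝ) * (1 - (X.card : ℝ) / ((n - 1).choose d : ℝ)) ≤
        Nat.card {σ : {s : Finset (Fin n) // s.card = d + 1} //
          σ ∉ X ∧ IndSet n d (insert σ X)}) (k : ℕ) :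
    (n.choose (d + 1) : ℝ) * (1 - (k : ℝ) / ((n - 1).choose d : ℝ)) *
      (Nat.card {X : Finset {s : Finset (Fin n) // s.card = d + 1} //
        X.card = k ∧ IndSet n d X} : ℝ) ≤
    ((k : ℝ) + 1) *
      (Nat.card {X : Finset {s : Finset (Fin n) // s.card = d + 1} //
        X.card = k + 1 ∧ IndSet n d X} : ℝ) := by
  classical
  set A : ℕ → Finset (Finset {s : Finset (Fin n) // s.card = d + 1}) := fun j =>
    Finset.univ.filter (fun X => X.card = j ∧ IndSet n d X) with hA
  have hcardA : ∀ j : ℕ, (Nat.card {X : Finset {s : Finset (Fin n) // s.card = d + 1} //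
      X.card = j ∧ IndSet n d X}) = (A j).card := by
    intro j
    rw [Nat.card_eq_fintype_card, Fintype.card_subtype]
  rw [hcardA, hcardA]
  set m : ℝ := (n.choose (d + 1) : ℝ) * (1 - (k : ℝ) / ((n - 1).choose d : ℝ)) with hm
  set P : Finset (Finset {s : Finset (Fin n) // s.card = d + 1} ×
      {s : Finset (Fin n) // s.card = d + 1}) :=
    ((A k) ×ˢ Finset.univ).filter (fun p => p.2 ∉ p.1 ∧ IndSet n d (insert p.2 p.1)) with hP
  have hfib : P.card = ∑ X ∈ A k, (P.filter (fun p => p.1 = X)).card := by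
    apply Finset.card_eq_sum_card_fiberwise
    intro p hp
    exact (Finset.mem_product.mp (Finset.mem_filter.mp hp).1).1
  have hfibcard : ∀ X ∈ A k, ((P.filter (fun p => p.1 = X)).card : ℕ) =
      Nat.card {σ : {s : Finset (Fin n) // s.card = d + 1} //
        σ ∉ X ∧ IndSet n d (insert σ X)} := by
    intro X hX
    rw [Nat.card_eq_fintype_card, Fintype.card_subtype]
    apply Finset.card_bij (fun p _ => p.2)
    · intro p hp
      have h1 := Finset.mem_filter.mp hp
      have h2 := Finset.mem_filter.mp h1.1
      rw [h1.2] at h2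
      simp only [Finset.mem_filter, Finset.mem_univ, true_and]
      exact h2.2
    · intro p hp q hq hpq
      have h1 := (Finset.mem_filter.mp hp).2
      have h2 := (Finset.mem_filter.mp hq).2
      exact Prod.ext (h1.trans h2.symm) hpq
    · intro σ hσ
      have h1 := (Finset.mem_filter.mp hσ).2
      refine ⟨(X, σ), ?_, rfl⟩
      exact Finset.mem_filter.mpr
        ⟨Finset.mem_filter.mpr ⟨Finset.mem_product.mpr ⟨hX, Finset.mem_univ _⟩, h1⟩, rfl⟩
  have hlow : m * ((A k).card : ℝ) ≤ (P.card : ℝ) := by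
    have hXle : ∀ X ∈ A k, m ≤ ((P.filter (fun p => p.1 = X)).card : ℝ) := by
      intro X hX
      rw [hfibcard X hX]
      have h1 := Finset.mem_filter.mp hX
      have h2 := hshadow X h1.2.2
      rw [h1.2.1] at h2
      exact h2
    calc m * ((A k).card : ℝ) = ∑ _X ∈ A k, m := by
          rw [Finset.sum_const, nsmul_eq_mul, mul_comm]
      _ ≤ ∑ X ∈ A k, ((P.filter (fun p => p.1 = X)).card : ℝ) := Finset.sum_le_sum hXle
      _ = (P.card : ℝ) := by rw [hfib]; push_cast; ring
  have hupper : P.card ≤ (k + 1) * (A (k + 1)).card := by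
    have himg : P.image (fun p => insert p.2 p.1) ⊆ A (k + 1) := by
      intro Y hY
      obtain ⟨p, hp, rfl⟩ := Finset.mem_image.mp hY
      have h1 := Finset.mem_filter.mp hp
      have h2 := Finset.mem_filter.mp (Finset.mem_product.mp h1.1).1
      exact Finset.mem_filter.mpr ⟨Finset.mem_univ _,
        by rw [Finset.card_insert_of_notMem h1.2.1, h2.2.1], h1.2.2⟩
    have hbound : ∀ Y ∈ P.image (fun p => insert p.2 p.1),
        (P.filter (fun p => insert p.2 p.1 = Y)).card ≤ k + 1 := by
      intro Y hY
      have hYcard : Y.card = k + 1 := (Finset.mem_filter.mp (himg hY)).2.1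
      have hle : (P.filter (fun p => insert p.2 p.1 = Y)).card ≤ Y.card := by
        apply Finset.card_le_card_of_injOn (fun p => p.2)
        · intro p hp
          have h1 := (Finset.mem_filter.mp hp).2
          rw [← h1]; exact Finset.mem_insert_self _ _
        · intro p hp q hq hpq
          simp only [Finset.coe_filter, Set.mem_setOf_eq] at hp hq
          have hp2 : p.2 ∉ p.1 := (Finset.mem_filter.mp hp.1).2.1
          have hq2 : q.2 ∉ q.1 := (Finset.mem_filter.mp hq.1).2.1
          have e1 : p.1 = Y.erase p.2 := by rw [← hp.2, Finset.erase_insert hp2]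
          have e2 : q.1 = Y.erase q.2 := by rw [← hq.2, Finset.erase_insert hq2]
          have hpq' : p.2 = q.2 := hpq
          exact Prod.ext (by rw [e1, e2, hpq']) hpq'
      omega
    calc P.card ≤ (k + 1) * (P.image (fun p => insert p.2 p.1)).card :=
          Finset.card_le_mul_card_image P (k + 1) hbound
      _ ≤ (k + 1) * (A (k + 1)).card :=
          Nat.mul_le_mul_left _ (Finset.card_le_card himg)
  calc m * ((A k).card : ℝ) ≤ (P.card : ℝ) := hlow
    _ ≤ ((k : ℝ) + 1) * ((A (k + 1)).card : ℝ) := by exact_mod_cast hupper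

lemma prod_desc (M : ℕ) : (∏ i ∈ Finset.range M, ((M:ℝ) - i)) = Nat.factorial M := by
  have h1 : ∀ i ∈ Finset.range M, ((M:ℝ) - i) = (((M - 1 - i) + 1 : ℕ) : ℝ) := by
    intro i hi
    have hiM : i < M := Finset.mem_range.mp hi
    have h2 : M - 1 - i + 1 = M - i := by omega
    rw [h2, Nat.cast_sub (le_of_lt hiM)]
  rw [Finset.prod_congr rfl h1, Finset.prod_range_reflect (fun j => ((j + 1 : ℕ) : ℝ)) M]
  norm_cast
  exact Finset.prod_range_add_one_eq_factorial M


set_option maxHeartbeats 1000000 in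
/-- Given the shadow bound — every `d`-acyclic set `X` of `d`-faces admits at
least `C(n,d+1)·(1 - |X|/C(n-1,d))` one-face acyclic extensions — the number of
`d`-hypertrees on `n` vertices is at least `(n/(d+1))^{C(n-1,d)}`. -/
theorem count_hypertrees_lower (n d : ℕ) (hd : 1 ≤ d) (hn : d < n)
    (hshadow : ∀ X : Finset {s : Finset (Fin n) // s.card = d + 1},
      LinearIndependent ℚ (fun σ : ↥X => (boundaryMatrix n d)ᵀ σ.1) →
      (n.choose (d + 1) : ℝ) * (1 - (X.card : ℝ) / ((n - 1).choose d : ℝ)) ≤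
        Nat.card {σ : {s : Finset (Fin n) // s.card = d + 1} // σ ∉ X ∧
          LinearIndependent ℚ
            (fun τ : ↥(insert σ X) => (boundaryMatrix n d)ᵀ τ.1)}) :
    ((n : ℝ) / (d + 1)) ^ ((n - 1).choose d) ≤
      Nat.card {T : Finset {s : Finset (Fin n) // s.card = d + 1} //
        T.card = (n - 1).choose d ∧
        LinearIndependent ℚ (fun σ : ↥T => (boundaryMatrix n d)ᵀ σ.1) ∧
        Submodule.span ℚ ((fun σ : {s : Finset (Fin n) // s.card = d + 1} =>
            (boundaryMatrix n d)ᵀ σ) '' (T : Set _)) =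
          Submodule.span ℚ (Set.range (boundaryMatrix n d)ᵀ)} := by
  classical
  set N := (n - 1).choose d with hN
  have hNpos : 0 < N := Nat.choose_pos (by omega)
  have hN0 : ((N : ℝ)) ≠ 0 := by positivity
  set C := n.choose (d + 1) with hC
  let a : ℕ → ℕ := fun k => Nat.card {X : Finset {s : Finset (Fin n) // s.card = d + 1} //
    X.card = k ∧ IndSet n d X}
  have hstep := count_step n d (fun X hX => hshadow X hX)
  have ha0 : 1 ≤ a 0 := by
    have : Nonempty {X : Finset {s : Finset (Fin n) // s.card = d + 1} //
        X.card = 0 ∧ IndSet n d X} := ⟨⟨∅, Finset.card_empty, indSet_empty n d⟩⟩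
    exact Nat.one_le_iff_ne_zero.mpr (Nat.card_ne_zero.mpr ⟨this, inferInstance⟩)
  -- the induction
  have hind : ∀ k, k ≤ N →
      (∏ i ∈ Finset.range k, ((C : ℝ) * (1 - (i : ℝ) / (N : ℝ)))) ≤
        (Nat.factorial k : ℝ) * (a k : ℝ) := by
    intro k
    induction k with
    | zero =>
      intro _
      simp only [Finset.range_zero, Finset.prod_empty, Nat.factorial_zero, Nat.cast_one, one_mul]
      exact_mod_cast ha0
    | succ k ih =>
      intro hk1
      have hkN : k < N := by omega
      have ihk := ih (le_of_lt hkN)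
      have hmnn : (0 : ℝ) ≤ (C : ℝ) * (1 - (k : ℝ) / (N : ℝ)) := by
        apply mul_nonneg (Nat.cast_nonneg _)
        rw [sub_nonneg]
        rw [div_le_one (by positivity)]
        exact_mod_cast le_of_lt hkN
      calc (∏ i ∈ Finset.range (k+1), ((C : ℝ) * (1 - (i : ℝ) / (N : ℝ))))
          = (∏ i ∈ Finset.range k, ((C : ℝ) * (1 - (i : ℝ) / (N : ℝ)))) *
            ((C : ℝ) * (1 - (k : ℝ) / (N : ℝ))) := Finset.prod_range_succ _ _
        _ ≤ ((Nat.factorial k : ℝ) * (a k : ℝ)) * ((C : ℝ) * (1 - (k : ℝ) / (N : ℝ))) :=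
            mul_le_mul_of_nonneg_right ihk hmnn
        _ = (Nat.factorial k : ℝ) * ((C : ℝ) * (1 - (k : ℝ) / (N : ℝ)) * (a k : ℝ)) := by ring
        _ ≤ (Nat.factorial k : ℝ) * (((k : ℝ) + 1) * (a (k+1) : ℝ)) := by
            apply mul_le_mul_of_nonneg_left (hstep k) (Nat.cast_nonneg _)
        _ = (Nat.factorial (k+1) : ℝ) * (a (k+1) : ℝ) := by
            rw [Nat.factorial_succ]; push_cast; ring
  -- the product evaluates
  have hratio : (C : ℝ) / (N : ℝ) = (n : ℝ) / ((d : ℝ) + 1) := by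
    rw [div_eq_div_iff hN0 (by positivity)]
    have h2 : n.choose (d + 1) * (d + 1) = n * ((n - 1).choose d) := by
      have hs : n - 1 + 1 = n := by omega
      have h3 := Nat.add_one_mul_choose_eq (n - 1) d
      rw [hs] at h3
      exact h3.symm
    rw [hC, hN]
    exact_mod_cast h2
  have hprod : (∏ i ∈ Finset.range N, ((C : ℝ) * (1 - (i : ℝ) / (N : ℝ)))) =
      ((n : ℝ) / ((d : ℝ) + 1)) ^ N * (Nat.factorial N : ℝ) := by
    have heach : ∀ i ∈ Finset.range N, (C : ℝ) * (1 - (i : ℝ) / (N : ℝ)) =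
        ((C : ℝ) / (N : ℝ)) * ((N : ℝ) - (i : ℝ)) := by
      intro i _
      field_simp
    rw [Finset.prod_congr rfl heach, Finset.prod_mul_distrib, Finset.prod_const,
      Finset.card_range, prod_desc, hratio]
  -- identify the target Nat.card with a N
  have hcardeq : Nat.card {T : Finset {s : Finset (Fin n) // s.card = d + 1} //
        T.card = N ∧
        LinearIndependent ℚ (fun σ : ↥T => (boundaryMatrix n d)ᵀ σ.1) ∧
        Submodule.span ℚ ((fun σ : {s : Finset (Fin n) // s.card = d + 1} =>
            (boundaryMatrix n d)ᵀ σ) '' (T : Set _)) =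
          Submodule.span ℚ (Set.range (boundaryMatrix n d)ᵀ)} = a N := by
    apply Nat.card_congr
    apply Equiv.subtypeEquivRight
    intro T
    constructor
    · rintro ⟨h1, h2, _⟩
      exact ⟨h1, h2⟩
    · rintro ⟨h1, h2⟩
      refine ⟨h1, h2, ?_⟩
      have hsub : Submodule.span ℚ ((fun σ : {s : Finset (Fin n) // s.card = d + 1} =>
          (boundaryMatrix n d)ᵀ σ) '' (T : Set _)) ≤
          Submodule.span ℚ (Set.range (boundaryMatrix n d)ᵀ) :=
        Submodule.span_mono (by rintro _ ⟨σ, _, rfl⟩; exact ⟨σ, rfl⟩)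
      have hfr1 : Module.finrank ℚ (Submodule.span ℚ
          ((fun σ : {s : Finset (Fin n) // s.card = d + 1} =>
            (boundaryMatrix n d)ᵀ σ) '' (T : Set _))) = N := by
        have himg : ((fun σ : {s : Finset (Fin n) // s.card = d + 1} =>
            (boundaryMatrix n d)ᵀ σ) '' (T : Set _)) =
            Set.range (fun σ : ↥T => (boundaryMatrix n d)ᵀ σ.1) := by
          rw [Set.image_eq_range]; rfl
        rw [himg, finrank_span_eq_card h2, Fintype.card_coe, h1]
      apply Submodule.eq_of_le_of_finrank_le hsub
      rw [hfr1]
      exact boundary_rank_le n d hn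
  rw [hN] at hcardeq ⊢
  rw [hcardeq]
  -- final arithmetic
  have hfinal := hind N (le_refl N)
  rw [hprod] at hfinal
  have hfact : (0 : ℝ) < (Nat.factorial N : ℝ) := by positivity
  have := (mul_le_mul_iff_left₀ hfact).mp (by linarith [hfinal] :
    ((n : ℝ) / ((d : ℝ) + 1)) ^ N * (Nat.factorial N : ℝ) ≤ (a N : ℝ) * (Nat.factorial N : ℝ))
  calc ((n : ℝ) / ((d : ℝ) + 1)) ^ N ≤ (a N : ℝ) := this
    _ = _ := by norm_num [a, hN]
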